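/- Let A = (A1 A2) ∈ ℝ^{m×n} with A1 ∈ ℝ^{m×k} of full rank k. For weight matrices W = (W1 W2), with W1 having positive entries and W2 staying bounded, let (X̃1(W) X̃2(W)) be a minimizer of ‖((A1 A2) − (X1 X2)) ⊙ (W1 W2)‖_F² over (X1 X2) with rank(X1 X2) ≤ r, and set λ = min_{i,j}(W1)_{ij}. Then ‖P_{X̃1(W)}(A2) − P_{A1}(A2)‖_F = O(1/λ) as λ → ∞; i.e., there exist constants C > 0 and λ0 > 0 such that λ ≥ λ0 implies ‖P_{X̃1(W)}(A2) − P_{A1}(A2)‖_F ≤ C/λ. -/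

import Mathlib

open Matrix Filter Topology

noncomputable def frob {α β : Type*} [Fintype α] [Fintype β] (M : Matrix α β ℝ) : ℝ :=
  Real.sqrt (∑ i, ∑ j, (M i j) ^ 2)

noncomputable def projCol {m k : ℕ} (B : Matrix (Fin m) (Fin k) ℝ) :
    Matrix (Fin m) (Fin m) ℝ :=
  B * (Bᵀ * B)⁻¹ * Bᵀ

attribute [local instance] Matrix.frobeniusSeminormedAddCommGroup
  Matrix.frobeniusNormedAddCommGroup Matrix.frobeniusNormedSpace
  Matrix.frobeniusNormedRing Matrix.frobeniusNormedAlgebra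

lemma frob_eq_norm {α β : Type*} [Fintype α] [Fintype β] (M : Matrix α β ℝ) :
    frob M = ‖M‖ := by
  rw [frob, Matrix.frobenius_norm_def, Real.sqrt_eq_rpow]
  congr 1
  refine Finset.sum_congr rfl fun i _ => Finset.sum_congr rfl fun j _ => ?_
  rw [Real.norm_eq_abs, Real.rpow_two, sq_abs]

lemma aux_isUnit {k : ℕ} (B : Matrix (Fin k) (Fin k) ℝ) (h : B.rank = k) : IsUnit B := by
  rw [← Matrix.mulVec_surjective_iff_isUnit]
  have hr : LinearMap.range B.mulVecLin = ⊤ := by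
    apply Submodule.eq_top_of_finrank_eq
    rw [← Matrix.rank, h]
    simp
  intro v
  obtain ⟨x, hx⟩ := LinearMap.range_eq_top.mp hr v
  exact ⟨x, hx⟩

lemma aux_bilin {a b c : ℕ} :
    IsBoundedBilinearMap ℝ
      (fun p : Matrix (Fin a) (Fin b) ℝ × Matrix (Fin b) (Fin c) ℝ => p.1 * p.2) where
  add_left := fun x y z => Matrix.add_mul x y z
  smul_left := fun c x y => Matrix.smul_mul c x y
  add_right := fun x y z => Matrix.mul_add x y z
  smul_right := fun c x y => Matrix.mul_smul x c y
  bound := ⟨1, one_pos, fun x y => by simpa using Matrix.frobenius_norm_mul x y⟩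

lemma aux_contdiff_mul {E : Type*} [NormedAddCommGroup E] [NormedSpace ℝ E] {a b c : ℕ}
    {f : E → Matrix (Fin a) (Fin b) ℝ} {g : E → Matrix (Fin b) (Fin c) ℝ} {x : E}
    (hf : ContDiffAt ℝ 1 f x) (hg : ContDiffAt ℝ 1 g x) :
    ContDiffAt ℝ 1 (fun y => f y * g y) x :=
  by
  have h := (aux_bilin.contDiff (n := 1)).contDiffAt.comp x (hf.prodMk hg)
  exact h

noncomputable def transCLM (m k : ℕ) :
    Matrix (Fin m) (Fin k) ℝ →L[ℝ] Matrix (Fin k) (Fin m) ℝ :=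
  LinearMap.toContinuousLinearMap
    { toFun := Matrix.transpose
      map_add' := Matrix.transpose_add
      map_smul' := fun c M => by simp [Matrix.transpose_smul] }

lemma frob_nonneg {α β : Type*} [Fintype α] [Fintype β] (M : Matrix α β ℝ) : 0 ≤ frob M :=
  Real.sqrt_nonneg _

lemma aux_key {m k l : ℕ} (A1 : Matrix (Fin m) (Fin k) ℝ) (A2 : Matrix (Fin m) (Fin l) ℝ)
    (hu : IsUnit (A1ᵀ * A1)) :
    ∃ K > (0:ℝ), ∃ ε > (0:ℝ), ∀ X, frob (A1 - X) ≤ ε →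
      frob (projCol X * A2 - projCol A1 * A2) ≤ K * frob (A1 - X) := by
  have hT : ContDiffAt ℝ 1 (fun X : Matrix (Fin m) (Fin k) ℝ => Xᵀ) A1 :=
    (transCLM m k).contDiff.contDiffAt
  have hinv : ContDiffAt ℝ 1 (fun Y : Matrix (Fin k) (Fin k) ℝ => Y⁻¹) (A1ᵀ * A1) := by
    have h1 : (fun Y : Matrix (Fin k) (Fin k) ℝ => Y⁻¹)
        = (Ring.inverse : Matrix (Fin k) (Fin k) ℝ → _) := by
      funext Y; exact Matrix.nonsing_inv_eq_ringInverse Y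
    rw [h1]
    have h2 := contDiffAt_ringInverse ℝ (n := 1) hu.unit
    rwa [hu.unit_spec] at h2
  have hTX : ContDiffAt ℝ 1 (fun X : Matrix (Fin m) (Fin k) ℝ => Xᵀ * X) A1 :=
    aux_contdiff_mul hT contDiffAt_id
  have hmid : ContDiffAt ℝ 1 (fun X : Matrix (Fin m) (Fin k) ℝ => (Xᵀ * X)⁻¹) A1 :=
    ContDiffAt.comp (f := fun X : Matrix (Fin m) (Fin k) ℝ => Xᵀ * X) A1 hinv hTX
  have hg : ContDiffAt ℝ 1 (fun X : Matrix (Fin m) (Fin k) ℝ => projCol X * A2) A1 := by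
    simp only [projCol]
    exact aux_contdiff_mul (aux_contdiff_mul (aux_contdiff_mul contDiffAt_id hmid) hT)
      contDiffAt_const
  obtain ⟨K, t, ht, hlip⟩ := hg.exists_lipschitzOnWith
  obtain ⟨ε, hε, hball⟩ := Metric.mem_nhds_iff.mp ht
  refine ⟨(K : ℝ) + 1, by positivity, ε / 2, by positivity, fun X hX => ?_⟩
  have hdX : dist X A1 = frob (A1 - X) := by
    rw [frob_eq_norm, dist_eq_norm, norm_sub_rev]
  have hXmem : X ∈ t := hball (by
    simp only [Metric.mem_ball, hdX]
    linarith)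
  have hA1mem : A1 ∈ t := hball (Metric.mem_ball_self hε)
  have hd := hlip.dist_le_mul X hXmem A1 hA1mem
  have heq : frob (projCol X * A2 - projCol A1 * A2) = dist (projCol X * A2) (projCol A1 * A2) := by
    rw [frob_eq_norm, dist_eq_norm]
  rw [heq]
  calc dist (projCol X * A2) (projCol A1 * A2) ≤ K * dist X A1 := hd
    _ = (K : ℝ) * frob (A1 - X) := by rw [hdX]
    _ ≤ ((K : ℝ) + 1) * frob (A1 - X) := by
        have := frob_nonneg (A1 - X); nlinarith [NNReal.coe_nonneg K]

lemma frob_sq {α β : Type*} [Fintype α] [Fintype β] (M : Matrix α β ℝ) :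
    frob M ^ 2 = ∑ i, ∑ j, (M i j) ^ 2 :=
  Real.sq_sqrt (by positivity)

lemma aux_rank {m k l : ℕ} (A1 : Matrix (Fin m) (Fin k) ℝ) (A2 : Matrix (Fin m) (Fin l) ℝ) :
    (Matrix.fromCols A1 (projCol A1 * A2)).rank ≤ A1.rank := by
  have h : projCol A1 * A2 = A1 * ((A1ᵀ * A1)⁻¹ * (A1ᵀ * A2)) := by
    simp only [projCol, Matrix.mul_assoc]
  calc (Matrix.fromCols A1 (projCol A1 * A2)).rank
      = (A1 * Matrix.fromCols 1 ((A1ᵀ * A1)⁻¹ * (A1ᵀ * A2))).rank := by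
        rw [Matrix.mul_fromCols, Matrix.mul_one, ← h]
    _ ≤ A1.rank := Matrix.rank_mul_le_left _ _

/-- **Lemma 3.6 (ii).** For minimizers of the weighted low rank problem with `W1` positive
and `W2` bounded (by `ρ`), `‖P_{X̃1(W)}(A2) − P_{A1}(A2)‖_F = O(1/λ)` as
`λ = min_{i,j}(W1)_{ij} → ∞`: there are `C > 0` and `λ0 > 0` such that `λ ≥ λ0` implies
`‖P_{X̃1(W)}(A2) − P_{A1}(A2)‖_F ≤ C/λ`. -/
theorem stmt_6 {m k l : ℕ}
    (A1 : Matrix (Fin m) (Fin k) ℝ) (A2 : Matrix (Fin m) (Fin l) ℝ)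
    (r : ℕ) (hrank : A1.rank = k) (hkr : k ≤ r) (hrmn : r ≤ min m (k + l))
    (ρ : ℝ) (hρ : 0 < ρ) :
    ∃ C > (0 : ℝ), ∃ lam0 > (0 : ℝ),
      ∀ (W1 : Matrix (Fin m) (Fin k) ℝ) (W2 : Matrix (Fin m) (Fin l) ℝ) (lam : ℝ)
        (X1 : Matrix (Fin m) (Fin k) ℝ) (X2 : Matrix (Fin m) (Fin l) ℝ),
        (∀ i j, 0 < W1 i j) → (∀ i j, |W2 i j| ≤ ρ) →
        (∀ i j, lam ≤ W1 i j) → (∃ i j, W1 i j = lam) → lam0 ≤ lam →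
        ((Matrix.fromCols X1 X2).rank ≤ r ∧
          ∀ (Y1 : Matrix (Fin m) (Fin k) ℝ) (Y2 : Matrix (Fin m) (Fin l) ℝ),
            (Matrix.fromCols Y1 Y2).rank ≤ r →
            frob (Matrix.hadamard (A1 - X1) W1) ^ 2 +
                frob (Matrix.hadamard (A2 - X2) W2) ^ 2 ≤
              frob (Matrix.hadamard (A1 - Y1) W1) ^ 2 +
                frob (Matrix.hadamard (A2 - Y2) W2) ^ 2) →
        frob (projCol X1 * A2 - projCol A1 * A2) ≤ C / lam := by
  have hu : IsUnit (A1ᵀ * A1) :=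
    aux_isUnit _ (by rw [Matrix.rank_transpose_mul_self, hrank])
  obtain ⟨K, hK, ε, hε, hkey⟩ := aux_key A1 A2 hu
  set B : Matrix (Fin m) (Fin l) ℝ := projCol A1 * A2 with hBdef
  set D : ℝ := ρ * frob (A2 - B) with hDdef
  have hD0 : 0 ≤ D := mul_nonneg hρ.le (frob_nonneg _)
  have hKD : 0 ≤ K * D := mul_nonneg hK.le hD0
  refine ⟨K * D + 1, by linarith, max 1 (D / ε + 1),
    lt_of_lt_of_le zero_lt_one (le_max_left _ _), ?_⟩
  rintro W1 W2 lam X1 X2 hW1pos hW2bd hlamle _hex hlam0 ⟨_hrX, hminX⟩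
  have hlam1 : (1:ℝ) ≤ lam := le_trans (le_max_left _ _) hlam0
  have hlam2 : D / ε + 1 ≤ lam := le_trans (le_max_right _ _) hlam0
  have hlampos : (0:ℝ) < lam := lt_of_lt_of_le zero_lt_one hlam1
  -- comparison with Y = (A1, B)
  have hrY : (Matrix.fromCols A1 B).rank ≤ r := by
    calc (Matrix.fromCols A1 B).rank ≤ A1.rank := aux_rank A1 A2
      _ = k := hrank
      _ ≤ r := hkr
  have hmin := hminX A1 B hrY
  have hzero : frob (Matrix.hadamard (A1 - A1) W1) = 0 := by
    simp [frob, Matrix.hadamard_apply]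
  rw [hzero] at hmin
  -- bound the second term by D^2
  have h2 : frob (Matrix.hadamard (A2 - B) W2) ^ 2 ≤ D ^ 2 := by
    rw [frob_sq, hDdef, mul_pow, frob_sq, Finset.mul_sum]
    refine Finset.sum_le_sum fun i _ => ?_
    rw [Finset.mul_sum]
    refine Finset.sum_le_sum fun j _ => ?_
    have hb := hW2bd i j
    have hw := abs_le.mp hb
    calc (Matrix.hadamard (A2 - B) W2 i j) ^ 2
        = ((A2 - B) i j) ^ 2 * (W2 i j) ^ 2 := by
          rw [Matrix.hadamard_apply]; ring
      _ ≤ ((A2 - B) i j) ^ 2 * ρ ^ 2 := by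
          have : (W2 i j) ^ 2 ≤ ρ ^ 2 := sq_le_sq' hw.1 hw.2
          nlinarith [sq_nonneg ((A2 - B) i j)]
      _ = ρ ^ 2 * ((A2 - B) i j) ^ 2 := by ring
  -- lower bound first term
  have h1 : lam ^ 2 * frob (A1 - X1) ^ 2 ≤ frob (Matrix.hadamard (A1 - X1) W1) ^ 2 := by
    rw [frob_sq, frob_sq, Finset.mul_sum]
    refine Finset.sum_le_sum fun i _ => ?_
    rw [Finset.mul_sum]
    refine Finset.sum_le_sum fun j _ => ?_
    have hw := hlamle i j
    calc lam ^ 2 * ((A1 - X1) i j) ^ 2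
        ≤ (W1 i j) ^ 2 * ((A1 - X1) i j) ^ 2 := by
          have : lam ^ 2 ≤ (W1 i j) ^ 2 := by nlinarith
          nlinarith [sq_nonneg ((A1 - X1) i j)]
      _ = (Matrix.hadamard (A1 - X1) W1 i j) ^ 2 := by
          rw [Matrix.hadamard_apply]; ring
  have hX2nn : 0 ≤ frob (Matrix.hadamard (A2 - X2) W2) ^ 2 := sq_nonneg _
  norm_num at hmin
  have hchain : (lam * frob (A1 - X1)) ^ 2 ≤ D ^ 2 := by
    rw [mul_pow]; linarith
  have h5 : lam * frob (A1 - X1) ≤ D := by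
    have h6 : 0 ≤ lam * frob (A1 - X1) := mul_nonneg hlampos.le (frob_nonneg _)
    exact (pow_le_pow_iff_left₀ h6 hD0 two_ne_zero).mp hchain
  have hfd : frob (A1 - X1) ≤ D / lam := by
    rw [le_div_iff₀ hlampos, mul_comm]; exact h5
  have hfe : frob (A1 - X1) ≤ ε := by
    refine le_trans hfd ?_
    rw [div_le_iff₀ hlampos]
    have hde : D / ε * ε = D := div_mul_cancel₀ D (ne_of_gt hε)
    nlinarith [mul_le_mul_of_nonneg_left hlam2 hε.le]
  calc frob (projCol X1 * A2 - projCol A1 * A2) ≤ K * frob (A1 - X1) := hkey X1 hfe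
    _ ≤ K * (D / lam) := mul_le_mul_of_nonneg_left hfd hK.le
    _ = K * D / lam := by ring
    _ ≤ (K * D + 1) / lam := by
        exact (div_le_div_iff_of_pos_right hlampos).mpr (by linarith)
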